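/- Suppose n balls are thrown uniformly and independently into m bins, and then the m bin occupancy counts (X_1, ..., X_m) are used to partition a uniformly random permutation of n distinct items into m consecutive slots of sizes X_1, ..., X_m. Then for each item e, the slot index Y_e in which e lands is uniformly distributed on {1, ..., m}, and the random variables (Y_e)_e over all n items are mutually independent. -/

import Mathlib

open Classical

/-- The slot (bin) index of position `p`, given bin occupancy counts `X`:
the number of bins whose cumulative occupancy is at most `p`. -/
def slotOf (m : ℕ) (X : ℕ → ℕ) (p : ℕ) : ℕ :=
  ((Finset.range m).filter (fun j => ∑ j' ∈ Finset.range (j + 1), X j' ≤ p)).card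

/-- The occupancy counts of a balls-in-bins assignment `b`. -/
def countsOf {n m : ℕ} (b : Fin n → Fin m) : ℕ → ℕ :=
  fun j => (Finset.univ.filter (fun i => (b i : ℕ) = j)).card

namespace Stmt5Aux

/-- prefix sums -/
def pS (X : ℕ → ℕ) (k : ℕ) : ℕ := ∑ j ∈ Finset.range k, X j

lemma pS_mono (X : ℕ → ℕ) : Monotone (pS X) :=
  monotone_nat_of_le_succ fun k => by
    rw [pS, pS, Finset.sum_range_succ]; exact Nat.le_add_right _ _

lemma pS_succ (X : ℕ → ℕ) (k : ℕ) : pS X (k + 1) = pS X k + X k := by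
  rw [pS, pS, Finset.sum_range_succ]

lemma slot_spec {n m : ℕ} {X : ℕ → ℕ} {p : ℕ} (hX : pS X m = n) (hp : p < n) :
    slotOf m X p < m ∧ pS X (slotOf m X p) ≤ p ∧ p < pS X (slotOf m X p + 1) := by
  have hm : 0 < m := by
    rcases Nat.eq_zero_or_pos m with h | h
    · exfalso; rw [h] at hX; simp [pS] at hX; omega
    · exact h
  set F := (Finset.range m).filter (fun j => ∑ j' ∈ Finset.range (j + 1), X j' ≤ p) with hF
  have hdc : ∀ a ∈ F, ∀ b ≤ a, b ∈ F := by
    intro a ha b hb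
    simp only [hF, Finset.mem_filter, Finset.mem_range] at ha ⊢
    exact ⟨lt_of_le_of_lt hb ha.1, le_trans (pS_mono X (Nat.succ_le_succ hb)) ha.2⟩
  have hmem : ∀ x, x ∈ F ↔ x < F.card := by
    intro x
    constructor
    · intro hx
      have hsub : Finset.range (x + 1) ⊆ F := fun y hy =>
        hdc x hx y (Nat.lt_succ_iff.mp (Finset.mem_range.mp hy))
      have := Finset.card_le_card hsub
      simpa using this
    · intro hx
      by_contra hx'
      have hsub : F ⊆ Finset.range x := by
        intro y hy
        rw [Finset.mem_range]
        by_contra hyx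
        exact hx' (hdc y hy x (le_of_not_gt hyx))
      have := Finset.card_le_card hsub
      simp only [Finset.card_range] at this
      omega
  have hk : slotOf m X p = F.card := rfl
  have hklt : F.card < m := by
    by_contra h
    have hm1 : m - 1 ∈ F := (hmem (m - 1)).mpr (by omega)
    have h2 := (Finset.mem_filter.mp hm1).2
    have : m - 1 + 1 = m := Nat.succ_pred_eq_of_pos hm
    rw [this] at h2
    have : pS X m ≤ p := h2
    omega
  refine ⟨hk ▸ hklt, ?_, ?_⟩
  · rcases Nat.eq_zero_or_pos F.card with h0 | h0
    · rw [hk, h0]; simp [pS]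
    · have : F.card - 1 ∈ F := (hmem _).mpr (by omega)
      have h2 := (Finset.mem_filter.mp this).2
      have h3 : pS X (F.card - 1 + 1) ≤ p := h2
      have he : F.card - 1 + 1 = F.card := by omega
      rw [he] at h3
      rw [hk]; exact h3
  · have : F.card ∉ F := fun h => by have := (hmem _).mp h; omega
    rw [hk]
    by_contra h
    exact this (Finset.mem_filter.mpr ⟨Finset.mem_range.mpr hklt, le_of_not_gt h⟩)

lemma slot_eq {n m : ℕ} {X : ℕ → ℕ} {p : ℕ} (hX : pS X m = n) (hp : p < n) (j : ℕ)
    (h1 : pS X j ≤ p) (h2 : p < pS X (j + 1)) : slotOf m X p = j := by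
  obtain ⟨_, hb1, hb2⟩ := slot_spec (n := n) hX hp
  set k := slotOf m X p
  rcases lt_trichotomy k j with h | h | h
  · exact absurd (le_trans (pS_mono X (Nat.succ_le_of_lt h)) h1) (not_le.mpr hb2)
  · exact h
  · exact absurd (le_trans (pS_mono X (Nat.succ_le_of_lt h)) hb1) (not_le.mpr h2)

/-- counts of the slot function -/
lemma counts_slot {n m : ℕ} {X : ℕ → ℕ} (hX : pS X m = n) (j : Fin m) :
    (Finset.univ.filter (fun p : Fin n => slotOf m X (p : ℕ) = (j : ℕ))).card = X j := by
  have hiff : ∀ p : Fin n, slotOf m X (p : ℕ) = (j : ℕ) ↔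
      pS X j ≤ (p : ℕ) ∧ (p : ℕ) < pS X ((j : ℕ) + 1) := by
    intro p
    constructor
    · intro h
      obtain ⟨_, h1, h2⟩ := slot_spec (n := n) hX p.isLt
      rw [h] at h1 h2
      exact ⟨h1, h2⟩
    · intro ⟨h1, h2⟩
      exact slot_eq hX p.isLt _ h1 h2
  have hcard : (Finset.univ.filter (fun p : Fin n => slotOf m X (p : ℕ) = (j : ℕ))).card =
      (Finset.Ico (pS X j) (pS X ((j : ℕ) + 1))).card := by
    refine Finset.card_nbij (fun p => (p : ℕ)) ?_ ?_ ?_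
    · intro p hp
      rw [Finset.mem_coe, Finset.mem_filter] at hp
      rw [Finset.mem_coe, Finset.mem_Ico]
      exact (hiff p).mp hp.2
    · intro p _ q _ h
      exact Fin.val_injective h
    · intro x hx
      simp only [Finset.coe_filter, Finset.mem_Ico, Finset.coe_Ico, Set.mem_Ico] at hx ⊢
      have hxn : x < n := by
        have : pS X ((j : ℕ) + 1) ≤ pS X m := pS_mono X (Nat.succ_le_of_lt j.isLt)
        omega
      exact ⟨⟨x, hxn⟩, ⟨Finset.mem_univ _, (hiff ⟨x, hxn⟩).mpr hx⟩, rfl⟩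
  rw [hcard, Nat.card_Ico, pS_succ]
  omega

/-- sum of counts is n -/
lemma pS_counts {n m : ℕ} (b : Fin n → Fin m) : pS (countsOf b) m = n := by
  rw [pS]
  have := Finset.card_eq_sum_card_fiberwise
    (f := fun i : Fin n => (b i : ℕ)) (s := Finset.univ) (t := Finset.range m)
    (fun i _ => Finset.mem_range.mpr (b i).isLt)
  simp only [Finset.card_univ, Fintype.card_fin] at this
  simpa [countsOf] using this.symm

lemma counts_lt {n m : ℕ} (b : Fin n → Fin m) {j : ℕ} (hj : m ≤ j) : countsOf b j = 0 := by
  rw [countsOf, Finset.card_eq_zero, Finset.filter_eq_empty_iff]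
  intro i _
  have := (b i).isLt
  omega

/-- permutation invariance of filter cardinality -/
lemma card_filter_perm {α : Type*} [Fintype α] (σ : Equiv.Perm α) (P : α → Prop)
    [DecidablePred P] [DecidablePred (fun a => P (σ a))] :
    (Finset.univ.filter (fun a => P (σ a))).card = (Finset.univ.filter P).card := by
  apply Finset.card_nbij (fun a => σ a)
  · intro a ha
    rw [Finset.mem_coe, Finset.mem_filter] at ha ⊢
    exact ⟨Finset.mem_univ _, ha.2⟩
  · intro a _ c _ h
    exact σ.injective h
  · intro x hx
    simp only [Finset.coe_filter, Set.mem_setOf_eq] at hx ⊢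
    exact ⟨σ.symm x, ⟨Finset.mem_univ _, by simpa using hx.2⟩, by simp⟩

/-- existence of a permutation matching two functions with equal fiber sizes -/
lemma exists_perm_comp {α β : Type*} [Fintype α] [DecidableEq β] (f f' : α → β)
    (h : ∀ j, (Finset.univ.filter fun a => f a = j).card =
      (Finset.univ.filter fun a => f' a = j).card) :
    ∃ χ : Equiv.Perm α, ∀ a, f (χ a) = f' a := by
  have hcard : ∀ j, Fintype.card {a // f' a = j} = Fintype.card {a // f a = j} := by
    intro j
    rw [Fintype.card_subtype, Fintype.card_subtype, h j]
  let F : ∀ j, {a // f' a = j} ≃ {a // f a = j} := fun j => Fintype.equivOfCardEq (hcard j)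
  refine ⟨(Equiv.sigmaFiberEquiv f').symm.trans
    ((Equiv.sigmaCongrRight F).trans (Equiv.sigmaFiberEquiv f)), ?_⟩
  intro a
  exact ((F (f' a)) ⟨a, rfl⟩).2

end Stmt5Aux

open Stmt5Aux

theorem stmt5 (n m : ℕ) (hn : 0 < n) (hm : 0 < m) :
    -- sample space: (balls-in-bins assignment, arrival permutation), uniform
    let Y : ((Fin n → Fin m) × Equiv.Perm (Fin n)) → Fin n → ℕ :=
      fun ω e => slotOf m (countsOf ω.1) ((ω.2 e : ℕ))
    -- joint law is the product of uniform marginals (uniformity + mutual independence)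
    (∀ g : Fin n → Fin m,
      ((Finset.univ.filter
          (fun ω : (Fin n → Fin m) × Equiv.Perm (Fin n) => ∀ e, Y ω e = (g e : ℕ))).card)
          * m ^ n
        = (Finset.univ : Finset ((Fin n → Fin m) × Equiv.Perm (Fin n))).card) ∧
    -- each marginal is uniform on the m slots
    (∀ e : Fin n, ∀ j : Fin m,
      ((Finset.univ.filter
          (fun ω : (Fin n → Fin m) × Equiv.Perm (Fin n) => Y ω e = (j : ℕ))).card) * m
        = (Finset.univ : Finset ((Fin n → Fin m) × Equiv.Perm (Fin n))).card) := by
  classical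
  intro Y
  have hY : ∀ (ω : (Fin n → Fin m) × Equiv.Perm (Fin n)) (e : Fin n),
      Y ω e = slotOf m (countsOf ω.1) ((ω.2 e : ℕ)) := fun ω e => rfl
  simp only [hY]
  have hS : ∀ b : Fin n → Fin m, pS (countsOf b) m = n := fun b => pS_counts b
  let sF : (Fin n → Fin m) → Fin n → Fin m := fun b p =>
    ⟨slotOf m (countsOf b) (p : ℕ), (slot_spec (hS b) p.isLt).1⟩
  have hsF : ∀ b p, (sF b p : ℕ) = slotOf m (countsOf b) (p : ℕ) := fun b p => rfl
  have hcounts_sF : ∀ (b : Fin n → Fin m) (j : ℕ), countsOf (sF b) j = countsOf b j := by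
    intro b j
    by_cases hj : j < m
    · exact counts_slot (hS b) ⟨j, hj⟩
    · rw [counts_lt (sF b) (le_of_not_gt hj), counts_lt b (le_of_not_gt hj)]
  have hvalcount : ∀ (b : Fin n → Fin m) (j : Fin m),
      (Finset.univ.filter fun a : Fin n => b a = j).card = countsOf b (j : ℕ) := by
    intro b j
    rw [show countsOf b (j : ℕ) =
      (Finset.univ.filter fun a : Fin n => (b a : ℕ) = (j : ℕ)).card from rfl]
    congr 1
    exact Finset.filter_congr (fun a _ => by simp [Fin.ext_iff])
  have fiber_eq : ∀ (b b' : Fin n → Fin m), countsOf b = countsOf b' →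
      ∀ j : Fin m, (Finset.univ.filter fun a : Fin n => b a = j).card =
        (Finset.univ.filter fun a : Fin n => b' a = j).card := by
    intro b b' h j
    rw [hvalcount b j, hvalcount b' j, h]
  have htot : (Finset.univ : Finset ((Fin n → Fin m) × Equiv.Perm (Fin n))).card
      = m ^ n * n.factorial := by
    simp [Finset.card_univ, Fintype.card_perm, Fintype.card_fun]
  -- the key count: each joint outcome has exactly n! preimages
  have key : ∀ g : Fin n → Fin m,
      (Finset.univ.filter (fun ω : (Fin n → Fin m) × Equiv.Perm (Fin n) =>
        ∀ e, slotOf m (countsOf ω.1) ((ω.2 e : ℕ)) = (g e : ℕ))).card = n.factorial := by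
    intro g
    have hmemA : ∀ ω : (Fin n → Fin m) × Equiv.Perm (Fin n),
        (∀ e, slotOf m (countsOf ω.1) ((ω.2 e : ℕ)) = (g e : ℕ)) ↔
        (∀ e, sF ω.1 (ω.2 e) = g e) := by
      intro ω
      constructor
      · intro h e; exact Fin.val_injective (h e)
      · intro h e; exact congrArg Fin.val (h e)
    have hbg : ∀ (b : Fin n → Fin m) (σ : Equiv.Perm (Fin n)),
        (∀ e, sF b (σ e) = g e) → countsOf b = countsOf g := by
      intro b σ h
      funext j
      by_cases hj : j < m
      · have h1 : countsOf b j =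
            (Finset.univ.filter (fun p : Fin n => slotOf m (countsOf b) (p : ℕ) = j)).card :=
          (counts_slot (hS b) ⟨j, hj⟩).symm
        rw [h1, ← card_filter_perm σ (fun p : Fin n => slotOf m (countsOf b) (p : ℕ) = j)]
        rw [show countsOf g j = (Finset.univ.filter (fun i : Fin n => (g i : ℕ) = j)).card from rfl]
        congr 1
        refine Finset.filter_congr (fun e _ => ?_)
        rw [← h e]
      · rw [counts_lt b (le_of_not_gt hj), counts_lt g (le_of_not_gt hj)]
    set b0 : Fin n → Fin m := sF g with hb0
    have hc0 : countsOf b0 = countsOf g := funext (fun j => hcounts_sF g j)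
    obtain ⟨ψ, hψ⟩ := exists_perm_comp b0 g (fiber_eq b0 g hc0)
    let χ : (Fin n → Fin m) → Equiv.Perm (Fin n) := fun b =>
      if h : ∃ χ0 : Equiv.Perm (Fin n), ∀ a, b (χ0 a) = b0 a then h.choose else 1
    have hχ : ∀ b : Fin n → Fin m, countsOf b = countsOf g → ∀ a, b (χ b a) = b0 a := by
      intro b hb a
      have hex : ∃ χ0 : Equiv.Perm (Fin n), ∀ a, b (χ0 a) = b0 a :=
        exists_perm_comp b b0 (fiber_eq b b0 (hb.trans hc0.symm))
      simp only [χ, dif_pos hex]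
      exact hex.choose_spec a
    have hχ' : ∀ b : Fin n → Fin m, countsOf b = countsOf g → ∀ x, b0 ((χ b)⁻¹ x) = b x := by
      intro b hb x
      have := hχ b hb ((χ b)⁻¹ x)
      rw [← Equiv.Perm.mul_apply, mul_inv_cancel, Equiv.Perm.one_apply] at this
      exact this.symm
    have hsF_congr : ∀ b : Fin n → Fin m, countsOf b = countsOf g → sF b = sF g := by
      intro b hb
      funext p
      apply Fin.val_injective
      show slotOf m (countsOf b) (p : ℕ) = slotOf m (countsOf g) (p : ℕ)
      rw [hb]
    have hAeq : (Finset.univ.filter (fun ω : (Fin n → Fin m) × Equiv.Perm (Fin n) =>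
        ∀ e, slotOf m (countsOf ω.1) ((ω.2 e : ℕ)) = (g e : ℕ))) =
        (Finset.univ.filter (fun ω : (Fin n → Fin m) × Equiv.Perm (Fin n) =>
          ∀ e, sF ω.1 (ω.2 e) = g e)) :=
      Finset.filter_congr (fun ω _ => hmemA ω)
    have hcard : (Finset.univ.filter (fun ω : (Fin n → Fin m) × Equiv.Perm (Fin n) =>
        ∀ e, sF ω.1 (ω.2 e) = g e)).card
        = (Finset.univ : Finset (Equiv.Perm (Fin n))).card := by
      apply Finset.card_nbij' (i := fun ω : (Fin n → Fin m) × Equiv.Perm (Fin n) =>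
          χ ω.1 * ω.2 * ψ⁻¹)
        (j := fun τ : Equiv.Perm (Fin n) =>
          ((fun i => b0 (τ⁻¹ i)), (χ (fun i => b0 (τ⁻¹ i)))⁻¹ * τ * ψ))
      · intro ω _; exact Finset.mem_univ _
      · intro τ _
        rw [Finset.mem_coe, Finset.mem_filter]
        refine ⟨Finset.mem_univ _, ?_⟩
        intro e
        set b' : Fin n → Fin m := fun i => b0 (τ⁻¹ i) with hb'
        have hcb' : countsOf b' = countsOf g := by
          funext jn
          have h1 : countsOf b' jn = countsOf b0 jn := by
            rw [show countsOf b' jn =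
              (Finset.univ.filter (fun i : Fin n => ((b0 (τ⁻¹ i) : ℕ) = jn))).card from rfl]
            exact card_filter_perm τ⁻¹ (fun i => (b0 i : ℕ) = jn)
          rw [h1, hc0]
        show sF b' (((χ b')⁻¹ * τ * ψ) e) = g e
        rw [hsF_congr b' hcb', Equiv.Perm.mul_apply, Equiv.Perm.mul_apply]
        rw [show sF g = b0 from rfl]
        rw [hχ' b' hcb' (τ (ψ e))]
        rw [hb']
        show b0 (τ⁻¹ (τ (ψ e))) = g e
        rw [← Equiv.Perm.mul_apply τ⁻¹ τ, inv_mul_cancel, Equiv.Perm.one_apply]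
        exact hψ e
      · intro ω hω
        rw [Finset.mem_coe, Finset.mem_filter] at hω
        obtain ⟨-, hω⟩ := hω
        obtain ⟨b, σ⟩ := ω
        simp only at hω
        have hcb : countsOf b = countsOf g := hbg b σ hω
        have hback : (fun i => b0 ((χ b * σ * ψ⁻¹)⁻¹ i)) = b := by
          funext i
          have h1 : (χ b * σ * ψ⁻¹)⁻¹ i = ψ (σ⁻¹ ((χ b)⁻¹ i)) := by
            simp [mul_assoc]
          rw [h1, hψ (σ⁻¹ ((χ b)⁻¹ i)), ← hω (σ⁻¹ ((χ b)⁻¹ i)),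
            ← Equiv.Perm.mul_apply, mul_inv_cancel, Equiv.Perm.one_apply, hsF_congr b hcb]
          exact hχ' b hcb i
        show ((fun i => b0 ((χ b * σ * ψ⁻¹)⁻¹ i)),
          (χ (fun i => b0 ((χ b * σ * ψ⁻¹)⁻¹ i)))⁻¹ * (χ b * σ * ψ⁻¹) * ψ) = (b, σ)
        rw [Prod.mk.injEq]
        refine ⟨hback, ?_⟩
        rw [hback]
        group
      · intro τ _
        show χ (fun i => b0 (τ⁻¹ i)) * ((χ (fun i => b0 (τ⁻¹ i)))⁻¹ * τ * ψ) * ψ⁻¹ = τ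
        group
    rw [hAeq, hcard, Finset.card_univ, Fintype.card_perm, Fintype.card_fin]
  constructor
  · intro g
    rw [key g, htot, Nat.mul_comm]
  · intro e j
    have step1 : (Finset.univ.filter (fun ω : (Fin n → Fin m) × Equiv.Perm (Fin n) =>
        slotOf m (countsOf ω.1) ((ω.2 e : ℕ)) = (j : ℕ))).card =
        (Finset.univ.filter (fun g : Fin n → Fin m => g e = j)).card * n.factorial := by
      set t := Finset.univ.filter (fun g : Fin n → Fin m => g e = j) with ht
      set s := Finset.univ.filter (fun ω : (Fin n → Fin m) × Equiv.Perm (Fin n) =>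
        slotOf m (countsOf ω.1) ((ω.2 e : ℕ)) = (j : ℕ)) with hs
      have hmap : ∀ ω ∈ s, (fun e' => sF ω.1 (ω.2 e')) ∈ t := by
        intro ω hω
        rw [hs, Finset.mem_filter] at hω
        rw [ht, Finset.mem_filter]
        exact ⟨Finset.mem_univ _, Fin.val_injective hω.2⟩
      rw [Finset.card_eq_sum_card_fiberwise hmap]
      have hfib : ∀ g ∈ t,
          (s.filter (fun ω => (fun e' => sF ω.1 (ω.2 e')) = g)).card = n.factorial := by
        intro g hg
        rw [ht, Finset.mem_filter] at hg
        have heq : s.filter (fun ω => (fun e' => sF ω.1 (ω.2 e')) = g) =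
            Finset.univ.filter (fun ω : (Fin n → Fin m) × Equiv.Perm (Fin n) =>
              ∀ e', slotOf m (countsOf ω.1) ((ω.2 e' : ℕ)) = (g e' : ℕ)) := by
          rw [hs, Finset.filter_filter]
          refine Finset.filter_congr (fun ω _ => ?_)
          constructor
          · intro ⟨h1, h2⟩ e'
            have := congrFun h2 e'
            exact congrArg Fin.val this
          · intro h
            constructor
            · rw [h e, hg.2]
            · funext e'
              exact Fin.val_injective (h e')
        rw [heq]
        exact key g
      rw [Finset.sum_congr rfl hfib, Finset.sum_const, smul_eq_mul]
    have hsame : ∀ j1 j2 : Fin m,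
        (Finset.univ.filter (fun g : Fin n → Fin m => g e = j1)).card =
        (Finset.univ.filter (fun g : Fin n → Fin m => g e = j2)).card := by
      intro j1 j2
      apply Finset.card_nbij' (i := fun g => (Equiv.swap j1 j2) ∘ g)
        (j := fun g => (Equiv.swap j1 j2) ∘ g)
      · intro g hg
        rw [Finset.mem_coe, Finset.mem_filter] at hg ⊢
        refine ⟨Finset.mem_univ _, ?_⟩
        show Equiv.swap j1 j2 (g e) = j2
        rw [hg.2, Equiv.swap_apply_left]
      · intro g hg
        rw [Finset.mem_coe, Finset.mem_filter] at hg ⊢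
        refine ⟨Finset.mem_univ _, ?_⟩
        show Equiv.swap j1 j2 (g e) = j1
        rw [hg.2, Equiv.swap_apply_right]
      · intro g _
        funext i
        simp [Function.comp, Equiv.swap_apply_self]
      · intro g _
        funext i
        simp [Function.comp, Equiv.swap_apply_self]
    have htc : (Finset.univ.filter (fun g : Fin n → Fin m => g e = j)).card * m = m ^ n := by
      have hfw := Finset.card_eq_sum_card_fiberwise
        (f := fun g : Fin n → Fin m => g e) (s := Finset.univ) (t := Finset.univ)
        (fun g _ => Finset.mem_univ _)
      rw [Finset.card_univ, Fintype.card_fun, Fintype.card_fin, Fintype.card_fin] at hfw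
      rw [Finset.sum_congr rfl (fun j' _ => hsame j' j), Finset.sum_const,
        Finset.card_univ, Fintype.card_fin, smul_eq_mul] at hfw
      rw [Nat.mul_comm]
      exact hfw.symm
    rw [step1, Nat.mul_right_comm, htc, htot]
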